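/- Let a < b and c be real. Then for x in (a,b), the principal value integral (1/(2π²))·sqrt((x-a)(b-x))·p.v.∫_a^b (t^3+ct)/((t-x)sqrt((t-a)(b-t))) dt equals (1/(2π)) sqrt((x-a)(b-x)) (x^2 + ((a+b)/2)x + (3/8)b^2 + (1/4)ab + (3/8)a^2 + c). -/

import Mathlib

set_option maxHeartbeats 1000000
open Real MeasureTheory Filter Set

noncomputable def pvF (a b c x t : ℝ) : ℝ :=
  (((b-a)/2)^2/2 + ((a+b)/2)^2 + x*((a+b)/2) + x^2 + c) *
      Real.arcsin ((t - (a+b)/2)/((b-a)/2))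
    - ((t - (a+b)/2)/2 + 2*((a+b)/2) + x) * Real.sqrt ((t-a)*(b-t))

noncomputable def pvN (a b x t : ℝ) : ℝ :=
  (x-a)*(b-x) + (t-x)*((a+b)/2 - x) +
    Real.sqrt ((x-a)*(b-x)) * Real.sqrt ((t-a)*(b-t))

noncomputable def pvG (a b x t : ℝ) : ℝ :=
  (-1 / Real.sqrt ((x-a)*(b-x))) *
    (Real.log (pvN a b x t) - Real.log (t-x) - Real.log ((b-a)/2))

noncomputable def pvH (a b c x t : ℝ) : ℝ := pvF a b c x t + (x^3 + c*x) * pvG a b x t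

lemma hasDerivAt_sqrtQ {a b t : ℝ} (h : 0 < (t-a)*(b-t)) :
    HasDerivAt (fun s => Real.sqrt ((s-a)*(b-s)))
      ((a + b - 2*t) / (2 * Real.sqrt ((t-a)*(b-t)))) t := by
  have hp : HasDerivAt (fun s : ℝ => (s-a)*(b-s)) (a + b - 2*t) t := by
    have h1 : HasDerivAt (fun s : ℝ => (s-a)*(b-s)) (1*(b-t) + (t-a)*(0-1)) t :=
      ((hasDerivAt_id t).sub_const a).mul ((hasDerivAt_const t b).sub (hasDerivAt_id t))
    convert h1 using 1; ring
  have h2 := (Real.hasDerivAt_sqrt (ne_of_gt h)).comp t hp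
  refine h2.congr_deriv ?_; symm
  field_simp

lemma hasDerivAt_arcsin_part {a b t : ℝ} (ha : a < t) (hb : t < b) :
    HasDerivAt (fun s => Real.arcsin ((s - (a+b)/2)/((b-a)/2)))
      (1 / Real.sqrt ((t-a)*(b-t))) t := by
  have hr : (0:ℝ) < (b-a)/2 := by linarith
  have hQ : 0 < (t-a)*(b-t) := mul_pos (by linarith) (by linarith)
  set S := Real.sqrt ((t-a)*(b-t)) with hSdef
  have hS : 0 < S := Real.sqrt_pos.2 hQ
  have hy : HasDerivAt (fun s : ℝ => (s - (a+b)/2)/((b-a)/2)) (1/((b-a)/2)) t := by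
    simpa using ((hasDerivAt_id t).sub_const ((a+b)/2)).div_const ((b-a)/2)
  have hy1 : (t - (a+b)/2)/((b-a)/2) < 1 := by
    rw [div_lt_one hr]; linarith
  have hy2 : -1 < (t - (a+b)/2)/((b-a)/2) := by
    rw [lt_div_iff₀ hr]; linarith
  have h1 := (Real.hasDerivAt_arcsin (by linarith) (by linarith)).comp t hy
  refine h1.congr_deriv ?_; symm
  have hr0 : (b-a)/2 ≠ 0 := ne_of_gt hr
  have h2 : 1 - ((t - (a+b)/2)/((b-a)/2))^2 = ((t-a)*(b-t))/((b-a)/2)^2 := by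
    rw [div_pow, eq_div_iff (pow_ne_zero 2 hr0), sub_mul, one_mul,
      div_mul_cancel₀ _ (pow_ne_zero 2 hr0)]
    ring
  rw [h2, Real.sqrt_div hQ.le, Real.sqrt_sq hr.le, ← hSdef]
  rw [one_div_div]
  rw [div_mul_eq_mul_div, mul_one_div, div_div, ← div_div, div_self hr0]

lemma pvN_pos {a b x t : ℝ} (hax : a < x) (hxb : x < b) (hta : a ≤ t) (htb : t ≤ b) :
    0 < pvN a b x t := by
  have h1 : 0 < (b-t)*(x-a) + (t-a)*(b-x) := by
    rcases eq_or_lt_of_le hta with h|h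
    · have hbt : 0 < b - t := by rw [← h]; linarith
      nlinarith [mul_nonneg (by linarith : (0:ℝ) ≤ t-a) (by linarith : (0:ℝ) ≤ b-x)]
    · nlinarith [mul_nonneg (by linarith : (0:ℝ) ≤ b-t) (by linarith : (0:ℝ) ≤ x-a),
        mul_pos (by linarith : (0:ℝ) < t-a) (by linarith : (0:ℝ) < b-x)]
  have h2 : 0 ≤ Real.sqrt ((x-a)*(b-x)) * Real.sqrt ((t-a)*(b-t)) :=
    mul_nonneg (Real.sqrt_nonneg _) (Real.sqrt_nonneg _)
  unfold pvN
  nlinarith [h1, h2]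

lemma hasDerivAt_pvF {a b c x t : ℝ} (ha : a < t) (hb : t < b) :
    HasDerivAt (pvF a b c x) ((t^2 + x*t + x^2 + c) / Real.sqrt ((t-a)*(b-t))) t := by
  have hQ : 0 < (t-a)*(b-t) := mul_pos (by linarith) (by linarith)
  set S := Real.sqrt ((t-a)*(b-t)) with hSdef
  have hS : 0 < S := Real.sqrt_pos.2 hQ
  have hS2 : S^2 = (t-a)*(b-t) := Real.sq_sqrt hQ.le
  have h1 := (hasDerivAt_arcsin_part ha hb).const_mul
      (((b-a)/2)^2/2 + ((a+b)/2)^2 + x*((a+b)/2) + x^2 + c)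
  have h3 : HasDerivAt (fun s : ℝ => (s - (a+b)/2)/2 + 2*((a+b)/2) + x) (1/2) t :=
    ((((hasDerivAt_id t).sub_const ((a+b)/2)).div_const 2).add_const (2*((a+b)/2))).add_const x
  have h2 := h3.mul (hasDerivAt_sqrtQ hQ)
  have h4 := h1.sub h2
  refine h4.congr_deriv ?_; symm
  rw [← hSdef]
  field_simp
  linear_combination 4 * hS2

lemma hasDerivAt_pvN {a b x t : ℝ} (hQ : 0 < (t-a)*(b-t)) :
    HasDerivAt (pvN a b x)
      (((a+b)/2 - x) + Real.sqrt ((x-a)*(b-x)) * ((a + b - 2*t)/(2 * Real.sqrt ((t-a)*(b-t))))) t := by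
  have h1 : HasDerivAt (fun s : ℝ => (x-a)*(b-x) + (s-x)*((a+b)/2 - x)) ((a+b)/2 - x) t := by
    simpa using (((hasDerivAt_id t).sub_const x).mul_const ((a+b)/2 - x)).const_add ((x-a)*(b-x))
  exact h1.add ((hasDerivAt_sqrtQ hQ).const_mul _)

lemma hasDerivAt_pvG {a b x t : ℝ} (hax : a < x) (hxb : x < b) (hta : a < t) (htb : t < b)
    (htx : t ≠ x) :
    HasDerivAt (pvG a b x) (1 / ((t - x) * Real.sqrt ((t-a)*(b-t)))) t := by
  have hQ : 0 < (t-a)*(b-t) := mul_pos (by linarith) (by linarith)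
  have hW : 0 < (x-a)*(b-x) := mul_pos (by linarith) (by linarith)
  set S := Real.sqrt ((t-a)*(b-t)) with hSdef
  set w := Real.sqrt ((x-a)*(b-x)) with hwdef
  have hS : 0 < S := Real.sqrt_pos.2 hQ
  have hw : 0 < w := Real.sqrt_pos.2 hW
  have hS2 : S^2 = (t-a)*(b-t) := Real.sq_sqrt hQ.le
  have hw2 : w^2 = (x-a)*(b-x) := Real.sq_sqrt hW.le
  have hN : 0 < pvN a b x t := pvN_pos hax hxb hta.le htb.le
  have htx' : t - x ≠ 0 := sub_ne_zero.2 htx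
  have hd1 := hasDerivAt_pvN (a:=a) (b:=b) (x:=x) hQ
  have hlog1 := (Real.hasDerivAt_log hN.ne').comp t hd1
  have hd2 : HasDerivAt (fun s : ℝ => s - x) (1:ℝ) t := by
    simpa using (hasDerivAt_id t).sub_const x
  have hlog2 := (Real.hasDerivAt_log htx').comp t hd2
  have h := (((hlog1.sub hlog2).sub_const (Real.log ((b-a)/2))).const_mul (-1 / w))
  have hG : pvG a b x = fun s =>
      (-1 / w) * (Real.log (pvN a b x s) - Real.log (s - x) - Real.log ((b-a)/2)) := rfl
  rw [hG]
  refine h.congr_deriv ?_; symm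
  have hNval : pvN a b x t = (x-a)*(b-x) + (t-x)*((a+b)/2 - x) + w * S := rfl
  have hNd : (pvN a b x t)⁻¹ * (((a+b)/2 - x) + w * ((a + b - 2*t)/(2*S)))
      = (S - w)/(S*(t-x)) := by
    rw [inv_mul_eq_div, div_eq_div_iff hN.ne' (by positivity)]
    rw [hNval]
    field_simp
    linear_combination (2*S) * hw2 - (2*w) * hS2
  rw [hNd]
  field_simp
  ring

lemma hasDerivAt_pvH {a b c x t : ℝ} (hax : a < x) (hxb : x < b) (hta : a < t) (htb : t < b)
    (htx : t ≠ x) :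
    HasDerivAt (pvH a b c x) ((t^3 + c*t)/((t - x) * Real.sqrt ((t-a)*(b-t)))) t := by
  have hQ : 0 < (t-a)*(b-t) := mul_pos (by linarith) (by linarith)
  have hS : 0 < Real.sqrt ((t-a)*(b-t)) := Real.sqrt_pos.2 hQ
  have htx' : t - x ≠ 0 := sub_ne_zero.2 htx
  have h := (hasDerivAt_pvF (c:=c) (x:=x) hta htb).add
    ((hasDerivAt_pvG hax hxb hta htb htx).const_mul (x^3 + c*x))
  refine h.congr_deriv ?_; symm
  field_simp
  ring

lemma continuous_pvF (a b c x : ℝ) : Continuous (pvF a b c x) := by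
  unfold pvF
  exact (continuous_const.mul (Real.continuous_arcsin.comp (by fun_prop))).sub
    ((by fun_prop : Continuous fun t : ℝ => (t - (a+b)/2)/2 + 2*((a+b)/2) + x).mul
      (by fun_prop : Continuous fun t : ℝ => Real.sqrt ((t-a)*(b-t))))

lemma continuous_pvN (a b x : ℝ) : Continuous (pvN a b x) := by
  unfold pvN
  fun_prop

lemma continuousAt_pvH {a b c x t : ℝ} (hax : a < x) (hxb : x < b) (hta : a ≤ t) (htb : t ≤ b)
    (htx : t ≠ x) : ContinuousAt (pvH a b c x) t := by
  have hN := pvN_pos hax hxb hta htb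
  have h1 : ContinuousAt (fun s => Real.log (pvN a b x s)) t :=
    (Real.continuousAt_log hN.ne').comp (continuous_pvN a b x).continuousAt
  have h2 : ContinuousAt (fun s : ℝ => Real.log (s - x)) t :=
    ContinuousAt.comp (x := t) (g := Real.log) (f := fun s : ℝ => s - x)
      (Real.continuousAt_log (sub_ne_zero.2 htx))
      ((continuous_id.sub continuous_const).continuousAt)
  have h3 : ContinuousAt (pvG a b x) t := by
    unfold pvG
    exact (continuousAt_const.mul ((h1.sub h2).sub continuousAt_const))
  exact ((continuous_pvF a b c x).continuousAt.add (continuousAt_const.mul h3))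

lemma measurable_integrand (a b c x : ℝ) :
    Measurable (fun t => (t^3 + c*t)/((t - x) * Real.sqrt ((t-a)*(b-t)))) := by
  fun_prop

lemma pvG_a {a b x : ℝ} (hax : a < x) (hxb : x < b) : pvG a b x a = 0 := by
  have hab : a < b := lt_trans hax hxb
  have hN : pvN a b x a = (x - a) * ((b-a)/2) := by
    unfold pvN
    rw [show (a-a)*(b-a) = 0 by ring, Real.sqrt_zero]
    ring
  unfold pvG
  rw [hN, show a - x = -(x-a) by ring, Real.log_neg_eq_log,
    Real.log_mul (by linarith) (by intro h; have : (b-a)/2 = 0 := h; linarith)]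
  ring

lemma pvG_b {a b x : ℝ} (hax : a < x) (hxb : x < b) : pvG a b x b = 0 := by
  have hab : a < b := lt_trans hax hxb
  have hN : pvN a b x b = (b - x) * ((b-a)/2) := by
    unfold pvN
    rw [show (b-a)*(b-b) = 0 by ring, Real.sqrt_zero, mul_zero]
    ring
  unfold pvG
  rw [hN, Real.log_mul (by linarith) (by intro h; have : (b-a)/2 = 0 := h; linarith)]
  ring

lemma pvG_diff {a b x ε : ℝ} (hε : 0 < ε) :
    pvG a b x (x-ε) - pvG a b x (x+ε) =
      (-1 / Real.sqrt ((x-a)*(b-x))) *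
        (Real.log (pvN a b x (x-ε)) - Real.log (pvN a b x (x+ε))) := by
  unfold pvG
  rw [show x - ε - x = -ε by ring, show x + ε - x = ε by ring, Real.log_neg_eq_log]
  ring

lemma pvF_sub {a b c x : ℝ} (hab : a < b) :
    pvF a b c x b - pvF a b c x a =
      π * (((b-a)/2)^2/2 + ((a+b)/2)^2 + x*((a+b)/2) + x^2 + c) := by
  have hr : (0:ℝ) < (b-a)/2 := by linarith
  unfold pvF
  rw [show (b - (a+b)/2)/((b-a)/2) = 1 by rw [show b - (a+b)/2 = (b-a)/2 by ring]; exact div_self (ne_of_gt hr),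
    show (a - (a+b)/2)/((b-a)/2) = -1 by rw [show a - (a+b)/2 = -((b-a)/2) by ring, neg_div, div_self (ne_of_gt hr)],
    Real.arcsin_one, Real.arcsin_neg, Real.arcsin_one,
    show (b-a)*(b-b) = 0 by ring, show (a-a)*(b-a) = 0 by ring, Real.sqrt_zero]
  ring

lemma abs_cubic_le {a b c t : ℝ} (hta : a ≤ t) (htb : t ≤ b) :
    |t^3 + c*t| ≤ (|a| + |b|)^3 + |c| * (|a| + |b|) := by
  have ht : |t| ≤ |a| + |b| := by
    rw [abs_le]
    constructor
    · have := neg_abs_le a; have := abs_nonneg b; linarith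
    · have := le_abs_self b; have := abs_nonneg a; linarith
  have h3 : |t| ^ 3 ≤ (|a| + |b|) ^ 3 := pow_le_pow_left₀ (abs_nonneg t) ht 3
  have h4 : |c| * |t| ≤ |c| * (|a| + |b|) := mul_le_mul_of_nonneg_left ht (abs_nonneg c)
  calc |t^3 + c*t| ≤ |t^3| + |c*t| := abs_add_le _ _
    _ = |t| ^ 3 + |c| * |t| := by rw [abs_pow, abs_mul]
    _ ≤ (|a| + |b|)^3 + |c| * (|a| + |b|) := by linarith

lemma integrable_left {a b c x ε : ℝ} (hax : a < x) (hxb : x < b) (hε : 0 < ε)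
    (hεx : ε < x - a) :
    IntervalIntegrable (fun t => (t^3 + c*t)/((t - x) * Real.sqrt ((t-a)*(b-t))))
      volume a (x - ε) := by
  have hbx : (0:ℝ) < b - x := by linarith
  have hax' : a < x - ε := by linarith
  set C := (|a| + |b|)^3 + |c| * (|a| + |b|) with hC
  have hCpos : 0 ≤ C := by positivity
  set M := C / (ε * Real.sqrt (b - x)) with hM
  have base : IntervalIntegrable (fun t : ℝ => (t - a) ^ (-(1/2) : ℝ)) volume (0 + a)
      ((x - ε - a) + a) := (intervalIntegral.intervalIntegrable_rpow' (by norm_num)).comp_sub_right a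
  rw [zero_add, sub_add_cancel] at base
  refine (base.const_mul M).mono_fun' ((measurable_integrand a b c x).aestronglyMeasurable) ?_
  rw [uIoc_of_le hax'.le, Filter.EventuallyLE, ae_restrict_iff' measurableSet_Ioc]
  refine Eventually.of_forall (fun t ht => ?_)
  obtain ⟨ht1, ht2⟩ := ht
  have hta : (0:ℝ) < t - a := by linarith
  have htx : t < x := by linarith
  have hbt : (0:ℝ) < b - t := by linarith
  have hsa : (0:ℝ) < Real.sqrt (t - a) := Real.sqrt_pos.2 hta
  have hsbx : (0:ℝ) < Real.sqrt (b - x) := Real.sqrt_pos.2 hbx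
  have hsplit : Real.sqrt ((t-a)*(b-t)) = Real.sqrt (t-a) * Real.sqrt (b-t) :=
    Real.sqrt_mul hta.le _
  rw [Real.norm_eq_abs, abs_div, abs_mul, abs_of_neg (by linarith : t - x < 0),
    abs_of_nonneg (Real.sqrt_nonneg _), hsplit]
  have hub : |t^3 + c*t| ≤ C := abs_cubic_le ht1.le (by linarith)
  have hden : ε * (Real.sqrt (b-x) * Real.sqrt (t-a)) ≤ -(t-x) * (Real.sqrt (t-a) * Real.sqrt (b-t)) := by
    have h1 : Real.sqrt (b-x) ≤ Real.sqrt (b-t) := Real.sqrt_le_sqrt (by linarith)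
    have h2 : ε ≤ -(t-x) := by linarith
    calc ε * (Real.sqrt (b-x) * Real.sqrt (t-a)) ≤ (-(t-x)) * (Real.sqrt (b-t) * Real.sqrt (t-a)) := by
          apply mul_le_mul h2 (by gcongr) (by positivity) (by linarith)
      _ = -(t-x) * (Real.sqrt (t-a) * Real.sqrt (b-t)) := by ring
  have hdpos : (0:ℝ) < ε * (Real.sqrt (b-x) * Real.sqrt (t-a)) := by positivity
  calc |t^3 + c*t| / (-(t-x) * (Real.sqrt (t-a) * Real.sqrt (b-t)))
      ≤ C / (ε * (Real.sqrt (b-x) * Real.sqrt (t-a))) := div_le_div₀ hCpos hub hdpos hden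
    _ = M * (t - a) ^ (-(1/2) : ℝ) := by
        rw [Real.rpow_neg hta.le, ← Real.sqrt_eq_rpow,
          show ε * (Real.sqrt (b-x) * Real.sqrt (t-a)) = (ε * Real.sqrt (b-x)) * Real.sqrt (t-a)
            by ring, ← div_div, div_eq_mul_inv]

lemma integrable_right {a b c x ε : ℝ} (hax : a < x) (hxb : x < b) (hε : 0 < ε)
    (hεx : ε < b - x) :
    IntervalIntegrable (fun t => (t^3 + c*t)/((t - x) * Real.sqrt ((t-a)*(b-t))))
      volume (x + ε) b := by
  have hxa : (0:ℝ) < x - a := by linarith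
  have hxb' : x + ε < b := by linarith
  set C := (|a| + |b|)^3 + |c| * (|a| + |b|) with hC
  have hCpos : 0 ≤ C := by positivity
  have base : IntervalIntegrable (fun t : ℝ => (b - t) ^ (-(1/2) : ℝ)) volume
      (b - (b - (x + ε))) (b - 0) :=
    (intervalIntegral.intervalIntegrable_rpow' (by norm_num)).comp_sub_left b
  rw [sub_sub_cancel, sub_zero] at base
  set M := C / (ε * Real.sqrt (x - a)) with hM
  refine (base.const_mul M).mono_fun' ((measurable_integrand a b c x).aestronglyMeasurable) ?_
  rw [uIoc_of_le hxb'.le, Filter.EventuallyLE, ae_restrict_iff' measurableSet_Ioc]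
  refine Eventually.of_forall (fun t ht => ?_)
  obtain ⟨ht1, ht2⟩ := ht
  have htb : (0:ℝ) ≤ b - t := by linarith
  have htx : x < t := by linarith
  have hta : (0:ℝ) < t - a := by linarith
  have hsb : (0:ℝ) ≤ Real.sqrt (b - t) := Real.sqrt_nonneg _
  have hsxa : (0:ℝ) < Real.sqrt (x - a) := Real.sqrt_pos.2 hxa
  have hsplit : Real.sqrt ((t-a)*(b-t)) = Real.sqrt (t-a) * Real.sqrt (b-t) :=
    Real.sqrt_mul hta.le _
  rw [Real.norm_eq_abs, abs_div, abs_mul, abs_of_pos (by linarith : (0:ℝ) < t - x),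
    abs_of_nonneg (Real.sqrt_nonneg _), hsplit]
  have hub : |t^3 + c*t| ≤ C := abs_cubic_le (by linarith) ht2
  rcases eq_or_lt_of_le htb with hbt0|hbt0
  · rw [show b - t = 0 from hbt0.symm, Real.sqrt_zero, mul_zero, mul_zero, div_zero]
    positivity
  have hsbt : (0:ℝ) < Real.sqrt (b - t) := Real.sqrt_pos.2 hbt0
  have hden : ε * (Real.sqrt (x-a) * Real.sqrt (b-t)) ≤ (t-x) * (Real.sqrt (t-a) * Real.sqrt (b-t)) := by
    have h1 : Real.sqrt (x-a) ≤ Real.sqrt (t-a) := Real.sqrt_le_sqrt (by linarith)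
    have h2 : ε ≤ t-x := by linarith
    apply mul_le_mul h2 (by gcongr) (by positivity) (by linarith)
  have hdpos : (0:ℝ) < ε * (Real.sqrt (x-a) * Real.sqrt (b-t)) := by positivity
  calc |t^3 + c*t| / ((t-x) * (Real.sqrt (t-a) * Real.sqrt (b-t)))
      ≤ C / (ε * (Real.sqrt (x-a) * Real.sqrt (b-t))) := div_le_div₀ hCpos hub hdpos hden
    _ = M * (b - t) ^ (-(1/2) : ℝ) := by
        rw [Real.rpow_neg htb, ← Real.sqrt_eq_rpow,
          show ε * (Real.sqrt (x-a) * Real.sqrt (b-t)) = (ε * Real.sqrt (x-a)) * Real.sqrt (b-t)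
            by ring, ← div_div, div_eq_mul_inv]

lemma ftc_left {a b c x ε : ℝ} (hax : a < x) (hxb : x < b) (hε : 0 < ε) (hεx : ε < x - a) :
    ∫ t in a..(x - ε), (t^3 + c*t)/((t - x) * Real.sqrt ((t-a)*(b-t)))
      = pvH a b c x (x - ε) - pvH a b c x a := by
  apply intervalIntegral.integral_eq_sub_of_hasDeriv_right_of_le (by linarith)
  · intro t ht
    obtain ⟨ht1, ht2⟩ := ht
    exact (continuousAt_pvH hax hxb ht1 (by linarith) (ne_of_lt (by linarith))).continuousWithinAt
  · intro t ht
    obtain ⟨ht1, ht2⟩ := ht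
    exact ((hasDerivAt_pvH hax hxb ht1 (by linarith) (ne_of_lt (by linarith))).hasDerivWithinAt)
  · exact integrable_left hax hxb hε hεx

lemma ftc_right {a b c x ε : ℝ} (hax : a < x) (hxb : x < b) (hε : 0 < ε) (hεx : ε < b - x) :
    ∫ t in (x + ε)..b, (t^3 + c*t)/((t - x) * Real.sqrt ((t-a)*(b-t)))
      = pvH a b c x b - pvH a b c x (x + ε) := by
  refine intervalIntegral.integral_eq_sub_of_hasDeriv_right_of_le (f := pvH a b c x)
    (by linarith) ?_ ?_ ?_
  · intro t ht
    obtain ⟨ht1, ht2⟩ := ht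
    exact (continuousAt_pvH hax hxb (by linarith) ht2 (ne_of_gt (by linarith))).continuousWithinAt
  · intro t ht
    obtain ⟨ht1, ht2⟩ := ht
    exact ((hasDerivAt_pvH hax hxb (by linarith) ht2 (ne_of_gt (by linarith))).hasDerivWithinAt)
  · exact integrable_right hax hxb hε hεx

theorem principal_value_singular_integral
    (a b c x : ℝ) (hab : a < b) (hx : x ∈ Set.Ioo a b) :
    Filter.Tendsto
      (fun ε : ℝ =>
        1 / (2 * π ^ 2) * Real.sqrt ((x - a) * (b - x)) *
          ∫ t in Set.Icc a b \ Set.Ioo (x - ε) (x + ε),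
            (t ^ 3 + c * t) / ((t - x) * Real.sqrt ((t - a) * (b - t))))
      (nhdsWithin 0 (Set.Ioi 0))
      (nhds (1 / (2 * π) * Real.sqrt ((x - a) * (b - x)) *
        (x ^ 2 + (a + b) / 2 * x + 3 / 8 * b ^ 2 + 1 / 4 * a * b + 3 / 8 * a ^ 2 + c))) := by
  obtain ⟨hax, hxb⟩ := hx
  set c₀ := 1 / (2 * π ^ 2) * Real.sqrt ((x - a) * (b - x)) with hc₀
  set K := x^3 + c*x with hK
  set Φ : ℝ → ℝ := fun ε => (pvH a b c x b - pvH a b c x a)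
    + (pvF a b c x (x-ε) - pvF a b c x (x+ε))
    + K * ((-1 / Real.sqrt ((x-a)*(b-x))) *
        (Real.log (pvN a b x (x-ε)) - Real.log (pvN a b x (x+ε)))) with hΦ
  have hδ : 0 < min (x - a) (b - x) := lt_min (by linarith) (by linarith)
  -- eventual equality
  have hkey : ∀ ε ∈ Ioo (0:ℝ) (min (x-a) (b-x)),
      (∫ t in Set.Icc a b \ Set.Ioo (x - ε) (x + ε),
        (t ^ 3 + c * t) / ((t - x) * Real.sqrt ((t - a) * (b - t)))) = Φ ε := by
    intro ε hε
    have hε1 : 0 < ε := hε.1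
    have hε2 : ε < x - a := lt_of_lt_of_le hε.2 (min_le_left _ _)
    have hε3 : ε < b - x := lt_of_lt_of_le hε.2 (min_le_right _ _)
    have hset : Set.Icc a b \ Set.Ioo (x-ε) (x+ε) = Set.Icc a (x-ε) ∪ Set.Icc (x+ε) b := by
      ext t
      simp only [Set.mem_diff, Set.mem_Icc, Set.mem_Ioo, Set.mem_union, not_and, not_lt]
      constructor
      · rintro ⟨⟨h1, h2⟩, h3⟩
        rcases le_or_gt t (x-ε) with h|h
        · exact Or.inl ⟨h1, h⟩
        · exact Or.inr ⟨h3 h, h2⟩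
      · rintro (⟨h1, h2⟩|⟨h1, h2⟩)
        · exact ⟨⟨h1, by linarith⟩, fun hh => by linarith⟩
        · exact ⟨⟨by linarith, h2⟩, fun _ => h1⟩
    have hdisj : Disjoint (Set.Icc a (x-ε)) (Set.Icc (x+ε) b) := by
      apply Set.disjoint_left.2
      intro t ht1 ht2
      rw [Set.mem_Icc] at ht1 ht2
      linarith [ht1.2, ht2.1]
    have hint1 : IntegrableOn
        (fun t => (t ^ 3 + c * t) / ((t - x) * Real.sqrt ((t - a) * (b - t))))
        (Set.Icc a (x-ε)) volume :=
      (intervalIntegrable_iff_integrableOn_Icc_of_le (by linarith)).1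
        (integrable_left hax hxb hε1 hε2)
    have hint2 : IntegrableOn
        (fun t => (t ^ 3 + c * t) / ((t - x) * Real.sqrt ((t - a) * (b - t))))
        (Set.Icc (x+ε) b) volume :=
      (intervalIntegrable_iff_integrableOn_Icc_of_le (by linarith)).1
        (integrable_right hax hxb hε1 hε3)
    rw [hset, setIntegral_union hdisj measurableSet_Icc hint1 hint2,
      integral_Icc_eq_integral_Ioc, integral_Icc_eq_integral_Ioc,
      ← intervalIntegral.integral_of_le (by linarith : a ≤ x - ε),
      ← intervalIntegral.integral_of_le (by linarith : x + ε ≤ b),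
      ftc_left hax hxb hε1 hε2, ftc_right hax hxb hε1 hε3]
    have hdiff := pvG_diff (a := a) (b := b) (x := x) hε1
    simp only [hΦ]
    rw [← hdiff]
    simp only [pvH]
    ring
  -- limit of Φ
  have hN : 0 < pvN a b x x := pvN_pos hax hxb (by linarith) (by linarith)
  have hcont : ContinuousAt Φ 0 := by
    have h1 : ContinuousAt (fun ε : ℝ => pvF a b c x (x-ε)) 0 :=
      (continuous_pvF a b c x).continuousAt.comp (by fun_prop)
    have h2 : ContinuousAt (fun ε : ℝ => pvF a b c x (x+ε)) 0 :=
      (continuous_pvF a b c x).continuousAt.comp (by fun_prop)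
    have h3 : ContinuousAt (fun ε : ℝ => Real.log (pvN a b x (x-ε))) 0 := by
      apply ContinuousAt.comp (x := (0:ℝ)) (g := Real.log) (f := fun ε : ℝ => pvN a b x (x-ε))
      · rw [show x - (0:ℝ) = x by ring]
        exact Real.continuousAt_log hN.ne'
      · exact (continuous_pvN a b x).continuousAt.comp (by fun_prop)
    have h4 : ContinuousAt (fun ε : ℝ => Real.log (pvN a b x (x+ε))) 0 := by
      apply ContinuousAt.comp (x := (0:ℝ)) (g := Real.log) (f := fun ε : ℝ => pvN a b x (x+ε))
      · rw [show x + (0:ℝ) = x by ring]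
        exact Real.continuousAt_log hN.ne'
      · exact (continuous_pvN a b x).continuousAt.comp (by fun_prop)
    exact (continuousAt_const.add (h1.sub h2)).add
      (continuousAt_const.mul (continuousAt_const.mul (h3.sub h4)))
  have hΦ0 : Φ 0 = pvH a b c x b - pvH a b c x a := by
    simp [hΦ]
  have hlim : Filter.Tendsto (fun ε => c₀ * Φ ε) (nhdsWithin 0 (Set.Ioi 0))
      (nhds (c₀ * (pvH a b c x b - pvH a b c x a))) := by
    have hlim0 : ContinuousAt (fun ε => c₀ * Φ ε) 0 := continuousAt_const.mul hcont
    have h2 := hlim0.tendsto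
    rw [hΦ0] at h2
    exact h2.mono_left nhdsWithin_le_nhds
  have hval : c₀ * (pvH a b c x b - pvH a b c x a) =
      1 / (2 * π) * Real.sqrt ((x - a) * (b - x)) *
        (x ^ 2 + (a + b) / 2 * x + 3 / 8 * b ^ 2 + 1 / 4 * a * b + 3 / 8 * a ^ 2 + c) := by
    have hsub : pvH a b c x b - pvH a b c x a =
        π * (((b-a)/2)^2/2 + ((a+b)/2)^2 + x*((a+b)/2) + x^2 + c) := by
      simp only [pvH, pvG_a hax hxb, pvG_b hax hxb, mul_zero, add_zero]
      exact pvF_sub hab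
    rw [hsub, hc₀]
    have hπ : (π:ℝ) ≠ 0 := Real.pi_ne_zero
    field_simp
    ring
  rw [← hval]
  apply hlim.congr'
  filter_upwards [Ioo_mem_nhdsGT_of_mem (Set.mem_Ico.2 ⟨le_refl 0, hδ⟩)] with ε hε
  rw [hkey ε hε]
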